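/- Let a_1,…,a_e ∈ ℝ^n \ {0} and let Δ = {λ_1 a_1 + … + λ_e a_e : λ_i ∈ ℝ, λ_i > 0} be the strictly positively spanned cone on a_1,…,a_e. Then there exists a finite partition of Δ into sets Δ_1,…,Δ_N such that each Δ_j is of the form {∑_{i ∈ S_j} λ_i a_i : λ_i ∈ ℝ, λ_i > 0} for some subset S_j ⊆ {1,…,e} with the family (a_i)_{i ∈ S_j} linearly independent over ℝ. -/

import Mathlib

open MeasureTheory MvPolynomial

namespace IgusaTS

noncomputable instance instLexLO (e : ℕ) : LinearOrder (Lex (∀ _ : Fin e, ℝ)) :=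
  Pi.Lex.linearOrder

variable {n e : ℕ}

/-- nonnegative representation of `x` in terms of the generators `a` -/
def Good (a : Fin e → Fin n → ℝ) (x : Fin n → ℝ) (lam : Fin e → ℝ) : Prop :=
  (∀ i, 0 ≤ lam i) ∧ x = ∑ i, lam i • a i

/-- the (finset) support of a coefficient vector -/
noncomputable def fsupp (lam : Fin e → ℝ) : Finset (Fin e) :=
  @Finset.filter _ (fun i => lam i ≠ 0) (Classical.decPred _) Finset.univ

lemma mem_fsupp {lam : Fin e → ℝ} {i : Fin e} : i ∈ fsupp lam ↔ lam i ≠ 0 := by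
  simp [fsupp]

lemma fsupp_eq_zero {lam : Fin e → ℝ} {i : Fin e} (h : i ∉ fsupp lam) : lam i = 0 := by
  by_contra hne; exact h (mem_fsupp.mpr hne)

/-- linear independence of the subfamily indexed by `S` -/
def IndOn (a : Fin e → Fin n → ℝ) (S : Finset (Fin e)) : Prop :=
  LinearIndependent ℝ (fun i : {i // i ∈ S} => a i.1)

lemma sum_fsupp (a : Fin e → Fin n → ℝ) (lam : Fin e → ℝ) :
    ∑ i ∈ fsupp lam, lam i • a i = ∑ i, lam i • a i :=
  Finset.sum_subset (Finset.subset_univ _) (fun i _ hi => by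
    rw [fsupp_eq_zero hi, zero_smul])

lemma sum_ite_mem' (a : Fin e → Fin n → ℝ) (S : Finset (Fin e)) (nu : Fin e → ℝ) :
    ∑ i, (if i ∈ S then nu i else 0) • a i = ∑ i ∈ S, nu i • a i := by
  have h : ∀ i, (if i ∈ S then nu i else 0) • a i = if i ∈ S then nu i • a i else 0 := by
    intro i; by_cases h : i ∈ S <;> simp [h]
  simp_rw [h]
  rw [Finset.sum_ite_mem, Finset.univ_inter]

/-- a uniform small positive `t` keeping the strict combination positive -/
lemma exists_t_pos (u v : Fin e → ℝ) (h : ∀ i, 0 < u i ∨ (0 ≤ u i ∧ 0 < v i)) :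
    ∃ t : ℝ, 0 < t ∧ ∀ i, 0 < u i + t * v i := by
  classical
  rcases isEmpty_or_nonempty (Fin e) with hE | hE
  · exact ⟨1, one_pos, fun i => isEmptyElim i⟩
  set g : Fin e → ℝ := fun i => if v i < 0 then u i / (2 * -v i) else 1 with hg
  have hgdef : ∀ i, g i = if v i < 0 then u i / (2 * -v i) else 1 := fun i => rfl
  have hupos : ∀ i, v i < 0 → 0 < u i := by
    intro i hv
    rcases h i with h' | h'
    · exact h'
    · linarith [h'.2]
  have hgpos : ∀ i, 0 < g i := by
    intro i; by_cases hv : v i < 0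
    · rw [hgdef i, if_pos hv]
      exact div_pos (hupos i hv) (by linarith)
    · rw [hgdef i, if_neg hv]; norm_num
  obtain ⟨k, -, hk⟩ := Finset.exists_min_image Finset.univ g Finset.univ_nonempty
  refine ⟨g k, hgpos k, ?_⟩
  intro i
  have htle : g k ≤ g i := hk i (Finset.mem_univ i)
  by_cases hv : v i < 0
  · have hu : 0 < u i := hupos i hv
    have h1 : g k ≤ u i / (2 * -v i) := by rwa [hgdef i, if_pos hv] at htle
    have h2 : g k * (2 * -v i) ≤ u i := (le_div_iff₀ (by linarith)).mp h1
    nlinarith [hgpos k]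
  · push_neg at hv
    rcases h i with h' | h'
    · nlinarith [mul_nonneg (hgpos k).le hv]
    · nlinarith [mul_pos (hgpos k) h'.2, h'.1]

/-- a uniform small positive `t` keeping the combination nonnegative -/
lemma exists_t_nonneg (u v : Fin e → ℝ) (hu : ∀ i, 0 ≤ u i) (h : ∀ i, v i < 0 → 0 < u i) :
    ∃ t : ℝ, 0 < t ∧ ∀ i, 0 ≤ u i + t * v i := by
  classical
  rcases isEmpty_or_nonempty (Fin e) with hE | hE
  · exact ⟨1, one_pos, fun i => isEmptyElim i⟩
  set g : Fin e → ℝ := fun i => if v i < 0 then u i / (2 * -v i) else 1 with hg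
  have hgdef : ∀ i, g i = if v i < 0 then u i / (2 * -v i) else 1 := fun i => rfl
  have hgpos : ∀ i, 0 < g i := by
    intro i; by_cases hv : v i < 0
    · rw [hgdef i, if_pos hv]
      exact div_pos (h i hv) (by linarith)
    · rw [hgdef i, if_neg hv]; norm_num
  obtain ⟨k, -, hk⟩ := Finset.exists_min_image Finset.univ g Finset.univ_nonempty
  refine ⟨g k, hgpos k, ?_⟩
  intro i
  have htle : g k ≤ g i := hk i (Finset.mem_univ i)
  by_cases hv : v i < 0
  · have h1 : g k ≤ u i / (2 * -v i) := by rwa [hgdef i, if_pos hv] at htle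
    have h2 : g k * (2 * -v i) ≤ u i := (le_div_iff₀ (by linarith)).mp h1
    nlinarith [hgpos k]
  · push_neg at hv
    nlinarith [mul_nonneg (hgpos k).le hv, hu i]

/-- lex-decreasing Carathéodory: every nonnegative representation can be replaced by a
lex-smaller one with linearly independent support.  Auxiliary, by induction on a bound
for the support size. -/
lemma carath_aux (a : Fin e → Fin n → ℝ) (x : Fin n → ℝ) :
    ∀ m : ℕ, ∀ lam : Fin e → ℝ, (fsupp lam).card ≤ m → Good a x lam →
      ∃ mu, Good a x mu ∧ IndOn a (fsupp mu) ∧ toLex mu ≤ toLex lam := by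
  classical
  intro m
  induction m with
  | zero =>
    intro lam hcard hlam
    have hs : fsupp lam = ∅ := Finset.card_eq_zero.mp (Nat.le_zero.mp hcard)
    refine ⟨lam, hlam, ?_, le_refl _⟩
    rw [IndOn, hs]
    haveI : IsEmpty {i : Fin e // i ∈ (∅ : Finset (Fin e))} :=
      ⟨fun i => absurd i.2 (Finset.notMem_empty _)⟩
    exact linearIndependent_empty_type
  | succ m IH =>
    intro lam hcard hlam
    by_cases hind : IndOn a (fsupp lam)
    · exact ⟨lam, hlam, hind, le_refl _⟩
    have main : ∀ c : Fin e → ℝ, (∑ i, c i • a i = 0) → (∀ i, c i ≠ 0 → i ∈ fsupp lam) →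
        ∀ j0 : Fin e, 0 < c j0 → (∀ i, i < j0 → c i = 0) →
        ∃ mu, Good a x mu ∧ (fsupp mu).card ≤ m ∧ toLex mu ≤ toLex lam := by
      intro c hcsum hcsupp j0 hj0 hj0z
      set T : Finset (Fin e) :=
        @Finset.filter _ (fun i => 0 < c i) (Classical.decPred _) Finset.univ with hT
      have hj0T : j0 ∈ T := by simp [hT, hj0]
      obtain ⟨k, hkT, hkmin⟩ := Finset.exists_min_image T (fun i => lam i / c i) ⟨j0, hj0T⟩
      have hck : 0 < c k := by simpa [hT] using hkT
      have hlamk0 : lam k ≠ 0 := mem_fsupp.mp (hcsupp k (ne_of_gt hck))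
      have hlamk : 0 < lam k := (hlam.1 k).lt_of_ne (Ne.symm hlamk0)
      set t := lam k / c k with ht
      have htpos : 0 < t := div_pos hlamk hck
      set mu : Fin e → ℝ := fun i => lam i - t * c i with hmu
      have hmuk : mu k = 0 := by
        simp only [hmu, ht]
        field_simp
        ring
      have hmusupp : ∀ i, mu i ≠ 0 → lam i ≠ 0 := by
        intro i hi
        by_contra h0
        have hc0 : c i = 0 := by
          by_contra hc0
          exact (mem_fsupp.mp (hcsupp i hc0)) h0
        simp [hmu, h0, hc0] at hi
      have hnn : ∀ i, 0 ≤ mu i := by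
        intro i
        by_cases hci : 0 < c i
        · have hmin := hkmin i (by simp [hT, hci])
          rw [div_le_div_iff₀ hck hci] at hmin
          simp only [hmu, ht, sub_nonneg, div_mul_eq_mul_div, div_le_iff₀ hck]
          linarith
        · push_neg at hci
          have h2 : t * c i ≤ 0 := mul_nonpos_of_nonneg_of_nonpos htpos.le hci
          simp only [hmu]
          linarith [hlam.1 i]
      have hgood : Good a x mu := by
        refine ⟨hnn, ?_⟩
        rw [hlam.2]
        simp only [hmu, sub_smul, mul_smul, Finset.sum_sub_distrib, ← Finset.smul_sum,
          hcsum, smul_zero, sub_zero]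
      have hsub : fsupp mu ⊆ (fsupp lam).erase k := by
        intro i hi
        rw [Finset.mem_erase]
        refine ⟨?_, mem_fsupp.mpr (hmusupp i (mem_fsupp.mp hi))⟩
        rintro rfl
        exact (mem_fsupp.mp hi) hmuk
      have hcard2 : (fsupp mu).card ≤ m := by
        have h1 := Finset.card_le_card hsub
        have h2 : ((fsupp lam).erase k).card = (fsupp lam).card - 1 :=
          Finset.card_erase_of_mem (hcsupp k (ne_of_gt hck))
        omega
      have hlex : toLex mu ≤ toLex lam := by
        apply le_of_lt
        have hlt : Pi.Lex (· < ·) (@fun _ => (· < ·)) mu lam := by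
          refine ⟨j0, ?_, ?_⟩
          · intro i hij
            simp [hmu, hj0z i hij]
          · have : 0 < t * c j0 := mul_pos htpos hj0
            simp only [hmu]
            linarith
        exact hlt
      exact ⟨mu, hgood, hcard2, hlex⟩
    rw [IndOn, Fintype.not_linearIndependent_iff] at hind
    obtain ⟨g, hgsum, i0, hgi0⟩ := hind
    set c : Fin e → ℝ := fun i => if h : i ∈ fsupp lam then g ⟨i, h⟩ else 0 with hc
    have hcsupp : ∀ i, c i ≠ 0 → i ∈ fsupp lam := by
      intro i hi
      by_contra h
      simp [hc, h] at hi
    have hcsum : ∑ i, c i • a i = 0 := by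
      have h1 : ∑ i, c i • a i = ∑ i ∈ fsupp lam, c i • a i :=
        (Finset.sum_subset (Finset.subset_univ _) (fun i _ hi => by
          have : c i = 0 := by simp [hc, hi]
          rw [this, zero_smul])).symm
      have h2 : ∑ i ∈ fsupp lam, c i • a i
          = ∑ i : {i // i ∈ fsupp lam}, c i.1 • a i.1 :=
        (Finset.sum_coe_sort (fsupp lam) (fun i => c i • a i)).symm
      have h3 : ∀ i : {i // i ∈ fsupp lam}, c i.1 • a i.1 = g i • a i.1 := by
        intro i
        simp [hc, i.2]
      rw [h1, h2]
      rw [Finset.sum_congr rfl (fun i _ => h3 i)]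
      exact hgsum
    have hci0 : c i0.1 ≠ 0 := by
      simpa [hc, i0.2] using hgi0
    have hne : (fsupp c).Nonempty := ⟨i0.1, mem_fsupp.mpr hci0⟩
    set j0 := (fsupp c).min' hne with hj0
    have hj0mem : j0 ∈ fsupp c := Finset.min'_mem _ _
    have hj0z : ∀ i, i < j0 → c i = 0 := by
      intro i hij
      by_contra hci
      exact absurd (Finset.min'_le _ i (mem_fsupp.mpr hci)) (not_le.mpr hij)
    have hstep : ∃ mu, Good a x mu ∧ (fsupp mu).card ≤ m ∧ toLex mu ≤ toLex lam := by
      rcases (mem_fsupp.mp hj0mem).lt_or_gt with hneg | hpos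
      · refine main (fun i => -c i) ?_ ?_ j0 (by simpa using hneg) ?_
        · simp only [neg_smul]
          rw [Finset.sum_neg_distrib, hcsum, neg_zero]
        · intro i hi
          exact hcsupp i (by simpa using hi)
        · intro i hij
          simp [hj0z i hij]
      · exact main c hcsum hcsupp j0 hpos hj0z
    obtain ⟨mu, hmu1, hmu2, hmu3⟩ := hstep
    obtain ⟨nu, hnu1, hnu2, hnu3⟩ := IH mu hmu2 hmu1
    exact ⟨nu, hnu1, hnu2, le_trans hnu3 hmu3⟩

lemma carath (a : Fin e → Fin n → ℝ) (x : Fin n → ℝ) {lam : Fin e → ℝ} (h : Good a x lam) :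
    ∃ mu, Good a x mu ∧ IndOn a (fsupp mu) ∧ toLex mu ≤ toLex lam :=
  carath_aux a x (fsupp lam).card lam le_rfl h

/-- a representation with independent support is unique given its support -/
lemma rep_unique (a : Fin e → Fin n → ℝ) (x : Fin n → ℝ) {lam mu : Fin e → ℝ}
    (hlam : Good a x lam) (hmu : Good a x mu) (hs : fsupp mu = fsupp lam)
    (hind : IndOn a (fsupp lam)) : lam = mu := by
  have hsum : ∑ i : {i // i ∈ fsupp lam}, (lam i.1 - mu i.1) • a i.1 = 0 := by
    have h1 : ∑ i : {i // i ∈ fsupp lam}, (lam i.1 - mu i.1) • a i.1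
        = ∑ i ∈ fsupp lam, (lam i - mu i) • a i :=
      Finset.sum_coe_sort (fsupp lam) (fun i => (lam i - mu i) • a i)
    rw [h1]
    simp only [sub_smul, Finset.sum_sub_distrib]
    rw [sum_fsupp, ← hs, sum_fsupp, ← hlam.2, ← hmu.2, sub_self]
  have hz := Fintype.linearIndependent_iff.mp hind (fun i => lam i.1 - mu i.1) hsum
  funext i
  by_cases h : i ∈ fsupp lam
  · have h0 : lam i - mu i = 0 := hz ⟨i, h⟩
    linarith [h0]
  · rw [fsupp_eq_zero h, fsupp_eq_zero (hs ▸ h : i ∉ fsupp mu)]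

/-- existence of the lexicographically minimal nonnegative representation -/
lemma exists_minrep (a : Fin e → Fin n → ℝ) (x : Fin n → ℝ) (hx : ∃ lam, Good a x lam) :
    ∃ lam, Good a x lam ∧ IndOn a (fsupp lam) ∧
      ∀ mu, Good a x mu → toLex lam ≤ toLex mu := by
  classical
  set R : Set (Fin e → ℝ) := {lam | Good a x lam ∧ IndOn a (fsupp lam)} with hR
  have hRne : R.Nonempty := by
    obtain ⟨lam, hlam⟩ := hx
    obtain ⟨mu, h1, h2, _⟩ := carath a x hlam
    exact ⟨mu, h1, h2⟩
  have hinj : Set.InjOn fsupp R := by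
    intro p hp q hq hpq
    exact rep_unique a x hp.1 hq.1 hpq.symm hp.2
  have hRfin : R.Finite := Set.Finite.of_finite_image (Set.toFinite _) hinj
  obtain ⟨lam, hlamR, hmin⟩ := Set.exists_min_image R toLex hRfin hRne
  refine ⟨lam, hlamR.1, hlamR.2, ?_⟩
  intro mu hmu
  obtain ⟨nu, h1, h2, h3⟩ := carath a x hmu
  exact le_trans (hmin nu ⟨h1, h2⟩) h3

/-- key lemma: if `lam` is the lex-minimal representation of `x`, then any point of the
open cone spanned by `a` on `fsupp lam` has its lex-minimal representation supported on
exactly `fsupp lam`. -/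
lemma support_const (a : Fin e → Fin n → ℝ) (x y : Fin n → ℝ) (lam lamy nu : Fin e → ℝ)
    (hlam : Good a x lam) (hmin : ∀ mu, Good a x mu → toLex lam ≤ toLex mu)
    (hnu : ∀ i ∈ fsupp lam, 0 < nu i) (hy : y = ∑ i ∈ fsupp lam, nu i • a i)
    (hlamy : Good a y lamy) (hminy : ∀ mu, Good a y mu → toLex lamy ≤ toLex mu) :
    fsupp lamy = fsupp lam := by
  classical
  set nu' : Fin e → ℝ := fun i => if i ∈ fsupp lam then nu i else 0 with hnu'
  have hnu'sum : ∑ i, nu' i • a i = ∑ i ∈ fsupp lam, nu i • a i := sum_ite_mem' a _ nu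
  have hGoodnu' : Good a y nu' := by
    refine ⟨?_, by rw [hy, ← hnu'sum]⟩
    intro i
    by_cases h : i ∈ fsupp lam
    · simp only [hnu', if_pos h]
      exact (hnu i h).le
    · simp [hnu', h]
  have heq : lamy = nu' := by
    by_contra hne
    have hle : toLex lamy ≤ toLex nu' := hminy nu' hGoodnu'
    have hlt : toLex lamy < toLex nu' :=
      lt_of_le_of_ne hle (fun h => hne (toLex_inj.mp h))
    have hlt' : Pi.Lex (· < ·) (@fun _ => (· < ·)) lamy nu' := hlt
    obtain ⟨j, hjeq, hjlt⟩ := hlt'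
    set d : Fin e → ℝ := fun i => lamy i - nu' i with hd
    have hdpos : ∀ i, d i < 0 → 0 < lam i := by
      intro i hi
      have h1 : 0 < nu' i := by
        have := hlamy.1 i
        simp only [hd] at hi
        linarith
      have h2 : i ∈ fsupp lam := by
        by_contra h
        simp [hnu', h] at h1
      exact (hlam.1 i).lt_of_ne (Ne.symm (mem_fsupp.mp h2))
    obtain ⟨t, htpos, ht⟩ := exists_t_nonneg lam d hlam.1 hdpos
    have hdsum : ∑ i, d i • a i = 0 := by
      simp only [hd, sub_smul, Finset.sum_sub_distrib]
      rw [← hlamy.2, ← hGoodnu'.2, sub_self]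
    have hgoodw : Good a x (fun i => lam i + t * d i) := by
      refine ⟨ht, ?_⟩
      simp only [add_smul, mul_smul, Finset.sum_add_distrib, ← Finset.smul_sum, hdsum,
        smul_zero, add_zero]
      exact hlam.2
    have hge := hmin _ hgoodw
    have hlt2 : toLex (fun i => lam i + t * d i) < toLex lam := by
      have : Pi.Lex (· < ·) (@fun _ => (· < ·)) (fun i => lam i + t * d i) lam := by
        refine ⟨j, ?_, ?_⟩
        · intro i hij
          have h0 : d i = 0 := by simp [hd, hjeq i hij]
          simp [h0]
        · have h0 : d j < 0 := by simp only [hd]; linarith [hjlt]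
          have : t * d j < 0 := mul_neg_of_pos_of_neg htpos h0
          show lam j + t * d j < lam j
          linarith
      exact this
    exact absurd hge (not_le.mpr hlt2)
  rw [heq]
  ext i
  simp only [mem_fsupp]
  constructor
  · intro hi
    by_contra hl
    have hnm : i ∉ fsupp lam := fun hm => (mem_fsupp.mp hm) hl
    exact hi (if_neg hnm)
  · intro hl
    have hm : i ∈ fsupp lam := mem_fsupp.mpr hl
    have h0 : nu' i = nu i := if_pos hm
    rw [h0]
    exact ne_of_gt (hnu i hm)

/-- **Lemma (Denef–Hoornaert).** A strictly positively spanned cone admits a finite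
partition into cones strictly positively spanned by linearly independent subfamilies
of the generators. -/
theorem stmt14 (n e : ℕ) (a : Fin e → (Fin n → ℝ)) (ha : ∀ i, a i ≠ 0)
    (Δ : Set (Fin n → ℝ))
    (hΔ : Δ = {x | ∃ lam : Fin e → ℝ, (∀ i, 0 < lam i) ∧ x = ∑ i, lam i • a i}) :
    ∃ (N : ℕ) (S : Fin N → Finset (Fin e)),
      (∀ j, LinearIndependent ℝ (fun i : (S j : Finset (Fin e)) => a i)) ∧
      (∀ j j', j ≠ j' → Disjoint
        {x : Fin n → ℝ | ∃ lam : Fin e → ℝ, (∀ i ∈ S j, 0 < lam i) ∧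
          x = ∑ i ∈ S j, lam i • a i}
        {x : Fin n → ℝ | ∃ lam : Fin e → ℝ, (∀ i ∈ S j', 0 < lam i) ∧
          x = ∑ i ∈ S j', lam i • a i}) ∧
      (⋃ j, {x : Fin n → ℝ | ∃ lam : Fin e → ℝ, (∀ i ∈ S j, 0 < lam i) ∧
          x = ∑ i ∈ S j, lam i • a i}) = Δ := by
  classical
  have hmr : ∀ x : Fin n → ℝ, x ∈ Δ → ∃ lam, Good a x lam ∧ IndOn a (fsupp lam) ∧
      ∀ mu, Good a x mu → toLex lam ≤ toLex mu := by
    intro x hx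
    rw [hΔ] at hx
    obtain ⟨lam, h1, h2⟩ := hx
    exact exists_minrep a x ⟨lam, fun i => (h1 i).le, h2⟩
  choose! F hF1 hF2 hF3 using hmr
  set cone : Finset (Fin e) → Set (Fin n → ℝ) := fun S =>
    {x | ∃ lam : Fin e → ℝ, (∀ i ∈ S, 0 < lam i) ∧ x = ∑ i ∈ S, lam i • a i} with hcone
  have hconesub : ∀ x ∈ Δ, cone (fsupp (F x)) ⊆ Δ := by
    intro x hx y hy
    obtain ⟨nu, hnupos, hysum⟩ := hy
    obtain ⟨lam0, hlam0pos, hlam0sum⟩ : ∃ lam0 : Fin e → ℝ,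
        (∀ i, 0 < lam0 i) ∧ x = ∑ i, lam0 i • a i := by rw [hΔ] at hx; exact hx
    have hGx := hF1 x hx
    set nu' : Fin e → ℝ := fun i => if i ∈ fsupp (F x) then nu i else 0 with hnu'
    set w : Fin e → ℝ := fun i => lam0 i - F x i with hw
    have hcase : ∀ i, 0 < nu' i ∨ (0 ≤ nu' i ∧ 0 < w i) := by
      intro i
      by_cases h : i ∈ fsupp (F x)
      · left; simpa [hnu', h] using hnupos i h
      · right
        have h0 : F x i = 0 := fsupp_eq_zero h
        exact ⟨by simp [hnu', h], by simp [hw, h0, hlam0pos i]⟩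
    obtain ⟨t, htpos, ht⟩ := exists_t_pos nu' w hcase
    rw [hΔ]
    refine ⟨fun i => nu' i + t * w i, ht, ?_⟩
    have h1 : ∑ i, nu' i • a i = y := by
      rw [hnu', sum_ite_mem' a _ nu, ← hysum]
    have h2 : ∑ i, w i • a i = 0 := by
      simp only [hw, sub_smul, Finset.sum_sub_distrib]
      rw [← hlam0sum, ← hGx.2, sub_self]
    simp only [add_smul, mul_smul, Finset.sum_add_distrib, ← Finset.smul_sum, h2,
      smul_zero, add_zero, h1]
  have hkey : ∀ x ∈ Δ, ∀ y ∈ cone (fsupp (F x)), fsupp (F y) = fsupp (F x) := by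
    intro x hx y hy
    have hyΔ : y ∈ Δ := hconesub x hx hy
    obtain ⟨nu, hnupos, hysum⟩ := hy
    exact support_const a x y (F x) (F y) nu (hF1 x hx) (hF3 x hx) hnupos hysum
      (hF1 y hyΔ) (hF3 y hyΔ)
  set Sig : Finset (Finset (Fin e)) :=
    @Finset.filter _ (fun T => ∃ x, x ∈ Δ ∧ fsupp (F x) = T) (Classical.decPred _)
      Finset.univ with hSig
  have hwit : ∀ T ∈ Sig, ∃ x, x ∈ Δ ∧ fsupp (F x) = T := by
    intro T hT
    rw [hSig, Finset.mem_filter] at hT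
    exact hT.2
  refine ⟨Sig.card, fun j => (Sig.equivFin.symm j : {T // T ∈ Sig}).1, ?_, ?_, ?_⟩
  · -- independence
    intro j
    obtain ⟨x, hx, hfx⟩ : ∃ x, x ∈ Δ ∧ fsupp (F x) = (Sig.equivFin.symm j).1 :=
      hwit _ (Sig.equivFin.symm j).2
    have h2 := hF2 x hx
    rw [IndOn, hfx] at h2
    exact h2
  · -- disjointness
    intro j j' hjj'
    rw [Set.disjoint_left]
    intro y hyj hyj'
    obtain ⟨x, hx, hfx⟩ : ∃ x, x ∈ Δ ∧ fsupp (F x) = (Sig.equivFin.symm j).1 :=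
      hwit _ (Sig.equivFin.symm j).2
    obtain ⟨x', hx', hfx'⟩ : ∃ x, x ∈ Δ ∧ fsupp (F x) = (Sig.equivFin.symm j').1 :=
      hwit _ (Sig.equivFin.symm j').2
    have hy1 : y ∈ cone (fsupp (F x)) := by rw [hfx]; exact hyj
    have hy2 : y ∈ cone (fsupp (F x')) := by rw [hfx']; exact hyj'
    have e1 := hkey x hx y hy1
    have e2 := hkey x' hx' y hy2
    have : (Sig.equivFin.symm j).1 = (Sig.equivFin.symm j').1 := by
      rw [← hfx, ← hfx', ← e1, ← e2]
    have : Sig.equivFin.symm j = Sig.equivFin.symm j' := Subtype.ext this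
    exact hjj' (Sig.equivFin.symm.injective this)
  · -- union
    apply Set.eq_of_subset_of_subset
    · intro y hy
      rw [Set.mem_iUnion] at hy
      obtain ⟨j, hyj⟩ := hy
      obtain ⟨x, hx, hfx⟩ : ∃ x, x ∈ Δ ∧ fsupp (F x) = (Sig.equivFin.symm j).1 :=
        hwit _ (Sig.equivFin.symm j).2
      exact hconesub x hx (by rw [hfx]; exact hyj)
    · intro y hy
      have hT : fsupp (F y) ∈ Sig := by
        rw [hSig, Finset.mem_filter]
        exact ⟨Finset.mem_univ _, y, hy, rfl⟩
      rw [Set.mem_iUnion]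
      refine ⟨Sig.equivFin ⟨fsupp (F y), hT⟩, ?_⟩
      have hSj : (Sig.equivFin.symm (Sig.equivFin ⟨fsupp (F y), hT⟩)).1 = fsupp (F y) := by
        rw [Equiv.symm_apply_apply]
      show ∃ lam : Fin e → ℝ, (∀ i ∈ (Sig.equivFin.symm (Sig.equivFin ⟨fsupp (F y), hT⟩)).1,
          0 < lam i) ∧ y = ∑ i ∈ (Sig.equivFin.symm (Sig.equivFin ⟨fsupp (F y), hT⟩)).1,
          lam i • a i
      rw [hSj]
      refine ⟨F y, ?_, ?_⟩
      · intro i hi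
        exact ((hF1 y hy).1 i).lt_of_ne (Ne.symm (mem_fsupp.mp hi))
      · rw [sum_fsupp]
        exact (hF1 y hy).2

end IgusaTS
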